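/- (Grötzsch's inequality via length-area) Let f be a continuously differentiable diffeomorphism from the rectangle R = (0,a)×(0,b) onto R' = (0,a')×(0,b'), extending continuously to the closure, mapping the vertical side {0}×[0,b] into {0}×[0,b'], the side {a}×[0,b] into {a'}×[0,b'], and similarly matching the horizontal sides, with positive Jacobian. If the dilatation quotient of f is everywhere at most C, then b/a ≤ C·(b'/a'). -/

import Mathlib

open MeasureTheory Complex Set Filter
open scoped ENNReal Topology

noncomputable def dilatation (L : ℂ →L[ℝ] ℂ) : ℝ :=
  (‖(L 1 - Complex.I * L Complex.I) / 2‖ +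
      ‖(L 1 + Complex.I * L Complex.I) / 2‖) /
    (‖(L 1 - Complex.I * L Complex.I) / 2‖ -
      ‖(L 1 + Complex.I * L Complex.I) / 2‖)

lemma det_formula (L : ℂ →L[ℝ] ℂ) :
    LinearMap.det L.toLinearMap =
      (L 1).re * (L I).im - (L 1).im * (L I).re := by
  rw [← LinearMap.det_toMatrix Complex.basisOneI, Matrix.det_fin_two]
  simp [LinearMap.toMatrix_apply, Complex.coe_basisOneI_repr, Complex.coe_basisOneI]
  ring

lemma abs_formula (L : ℂ →L[ℝ] ℂ) :
    (‖(L 1 - I * L I) / 2‖)^2 - (‖(L 1 + I * L I) / 2‖)^2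
      = (L 1).re * (L I).im - (L 1).im * (L I).re := by
  simp only [Complex.sq_norm, Complex.normSq_apply, Complex.div_re, Complex.div_im,
    Complex.sub_re, Complex.sub_im, Complex.add_re, Complex.add_im, Complex.mul_re,
    Complex.mul_im, Complex.I_re, Complex.I_im, Complex.normSq_apply]
  norm_num
  ring

lemma key_ptwise (C : ℝ) (L : ℂ →L[ℝ] ℂ) (hdet : 0 < LinearMap.det L.toLinearMap)
    (hD : dilatation L ≤ C) : ‖L 1‖^2 ≤ C * LinearMap.det L.toLinearMap := by
  set x := ‖(L 1 - I * L I) / 2‖ with hx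
  set y := ‖(L 1 + I * L I) / 2‖ with hy
  have h1 : (0:ℝ) ≤ x := norm_nonneg _
  have h2 : (0:ℝ) ≤ y := norm_nonneg _
  have hdet' : LinearMap.det L.toLinearMap = x^2 - y^2 := by
    rw [det_formula, ← abs_formula]
  have hxy : 0 < x - y := by nlinarith [hdet.trans_eq hdet']
  have hsum : x + y ≤ C * (x - y) := by
    have := (div_le_iff₀ hxy).mp hD
    exact this
  have hnorm : ‖L 1‖ ≤ x + y := by
    have h3 : L 1 = (L 1 - I * L I) / 2 + (L 1 + I * L I) / 2 := by ring
    calc ‖L 1‖ = ‖(L 1 - I * L I) / 2 + (L 1 + I * L I) / 2‖ := by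
          rw [← h3]
      _ ≤ x + y := norm_add_le _ _
  have hn : 0 ≤ ‖L 1‖ := norm_nonneg _
  rw [hdet']
  nlinarith

lemma one_le_dil (L : ℂ →L[ℝ] ℂ) (hdet : 0 < LinearMap.det L.toLinearMap) :
    1 ≤ dilatation L := by
  set x := ‖(L 1 - I * L I) / 2‖ with hx
  set y := ‖(L 1 + I * L I) / 2‖ with hy
  have h1 : (0:ℝ) ≤ x := norm_nonneg _
  have h2 : (0:ℝ) ≤ y := norm_nonneg _
  have hdet' : LinearMap.det L.toLinearMap = x^2 - y^2 := by
    rw [det_formula, ← abs_formula]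
  have hxy : 0 < x - y := by nlinarith [hdet.trans_eq hdet']
  rw [dilatation, ← hx, ← hy, le_div_iff₀ hxy]
  linarith

lemma cauchy_schwarz_lintegral {α : Type*} [MeasurableSpace α] (μ : Measure α)
    (f : α → ℝ≥0∞) (hf : AEMeasurable f μ) :
    (∫⁻ x, f x ∂μ)^2 ≤ μ Set.univ * ∫⁻ x, f x ^ 2 ∂μ := by
  have hpq : Real.HolderConjugate 2 2 := ⟨by norm_num, by norm_num, by norm_num⟩
  have h := ENNReal.lintegral_mul_le_Lp_mul_Lq μ hpq hf (g := fun _ => 1) aemeasurable_const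
  simp only [Pi.mul_apply, mul_one, one_mul, ENNReal.one_rpow, lintegral_const] at h
  have h2 := pow_le_pow_left' h 2
  refine h2.trans (le_of_eq ?_)
  rw [mul_pow]
  have key : ∀ x : ℝ≥0∞, (x ^ ((1:ℝ)/2))^2 = x := by
    intro x
    rw [← ENNReal.rpow_natCast (x ^ ((1:ℝ)/2)) 2, ← ENNReal.rpow_mul]
    norm_num
  have e1 : ∀ x : ℝ≥0∞, x ^ (2:ℝ) = x ^ (2:ℕ) := fun x => by
    rw [← ENNReal.rpow_natCast x 2]; norm_num
  simp only [e1] at *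
  rw [key, key, mul_comm]

/-- Grötzsch's inequality via length-area: a C¹ diffeomorphism `f` of the
open rectangle `(0,a)×(0,b)` onto `(0,a')×(0,b')`, extending continuously to the closure
and matching the four sides, with positive Jacobian and dilatation quotient everywhere
at most `C`, satisfies `b/a ≤ C (b'/a')`. -/
theorem stmt3 (a b a' b' C : ℝ) (ha : 0 < a) (hb : 0 < b) (ha' : 0 < a') (hb' : 0 < b')
    (f : ℂ → ℂ)
    (R : Set ℂ) (hR : R = {z : ℂ | z.re ∈ Set.Ioo 0 a ∧ z.im ∈ Set.Ioo 0 b})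
    (R' : Set ℂ) (hR' : R' = {z : ℂ | z.re ∈ Set.Ioo 0 a' ∧ z.im ∈ Set.Ioo 0 b'})
    (hdiff : ∀ z ∈ R, DifferentiableAt ℝ f z)
    (hC1 : ContinuousOn (fun z => fderiv ℝ f z) R)
    (hbij : Set.BijOn f R R')
    (hcont : ContinuousOn f (closure R))
    (hside0 : ∀ z ∈ closure R, z.re = 0 → (f z).re = 0 ∧ (f z).im ∈ Set.Icc 0 b')
    (hsidea : ∀ z ∈ closure R, z.re = a → (f z).re = a' ∧ (f z).im ∈ Set.Icc 0 b')
    (hbot : ∀ z ∈ closure R, z.im = 0 → (f z).im = 0 ∧ (f z).re ∈ Set.Icc 0 a')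
    (htop : ∀ z ∈ closure R, z.im = b → (f z).im = b' ∧ (f z).re ∈ Set.Icc 0 a')
    (hJac : ∀ z ∈ R, 0 < LinearMap.det (fderiv ℝ f z).toLinearMap)
    (hdil : ∀ z ∈ R, dilatation (fderiv ℝ f z) ≤ C) :
    b / a ≤ C * (b' / a') := by
  set s : Set ℝ := Set.Ioo 0 a with hs
  set t : Set ℝ := Set.Ioo 0 b with ht
  -- basic facts about R
  have hRopen : IsOpen R := by
    rw [hR]
    exact (isOpen_Ioo.preimage Complex.continuous_re).inter
      (isOpen_Ioo.preimage Complex.continuous_im)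
  have hRmeas : MeasurableSet R := hRopen.measurableSet
  have hmemR : ∀ x y : ℝ, x ∈ s → y ∈ t → (↑x + ↑y * I : ℂ) ∈ R := by
    intro x y hx hy
    rw [hR]
    constructor <;> simp [hx, hy]
  -- C ≥ 1
  have hC1' : (1:ℝ) ≤ C := by
    have hz0 : ((a/2 : ℝ) + (b/2 : ℝ) * I : ℂ) ∈ R :=
      hmemR _ _ ⟨by linarith, by linarith⟩ ⟨by linarith, by linarith⟩
    exact (one_le_dil _ (hJac _ hz0)).trans (hdil _ hz0)
  have hC0 : (0:ℝ) ≤ C := by linarith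
  -- measure-preserving equivalence
  set e := Complex.measurableEquivRealProd with he
  have hmp : MeasurePreserving e volume volume := Complex.volume_preserving_equiv_real_prod
  have hRpre : e.symm ⁻¹' R = s ×ˢ t := by
    rw [hR]; rfl
  have hR'pre : R' = e ⁻¹' (Set.Ioo 0 a' ×ˢ Set.Ioo 0 b') := by
    rw [hR']; rfl
  have hvolR' : volume R' = ENNReal.ofReal a' * ENNReal.ofReal b' := by
    rw [hR'pre, hmp.measure_preimage
      (measurableSet_Ioo.prod measurableSet_Ioo).nullMeasurableSet]
    rw [Measure.volume_eq_prod, Measure.prod_prod, Real.volume_Ioo, Real.volume_Ioo,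
      sub_zero, sub_zero]
  -- the Jacobian
  set J : ℂ → ℝ≥0∞ := fun z => ENNReal.ofReal ((fderiv ℝ f z).det) with hJ
  have hDcont : ContinuousOn (fun z => (fderiv ℝ f z).det) R :=
    ContinuousLinearMap.continuous_det.comp_continuousOn hC1
  -- change of variables
  have hT1 : (∫⁻ z in R, J z) = ENNReal.ofReal a' * ENNReal.ofReal b' := by
    have h := lintegral_abs_det_fderiv_eq_addHaar_image volume hRmeas
      (fun z hz => (hdiff z hz).hasFDerivAt.hasFDerivWithinAt) hbij.injOn
    rw [hbij.image_eq, hvolR'] at h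
    rw [← h]
    refine setLIntegral_congr_fun hRmeas (fun z hz => ?_)
    rw [hJ]
    simp only
    rw [abs_of_pos (hJac z hz)]
  -- Fubini
  have hmapsto : Set.MapsTo (fun p : ℝ × ℝ => (↑p.1 + ↑p.2 * I : ℂ)) (s ×ˢ t) R :=
    fun p hp => hmemR _ _ hp.1 hp.2
  have hFcont : ContinuousOn (fun p : ℝ × ℝ => J (↑p.1 + ↑p.2 * I)) (s ×ˢ t) := by
    refine ENNReal.continuous_ofReal.comp_continuousOn ?_
    refine hDcont.comp ?_ hmapsto
    exact ((Complex.continuous_ofReal.comp continuous_fst).add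
      ((Complex.continuous_ofReal.comp continuous_snd).mul continuous_const)).continuousOn
  have hFmeas : AEMeasurable (fun p : ℝ × ℝ => J (↑p.1 + ↑p.2 * I))
      ((volume.restrict s).prod (volume.restrict t)) := by
    rw [Measure.prod_restrict]
    exact hFcont.aemeasurable (measurableSet_Ioo.prod measurableSet_Ioo)
  have hT2 : (∫⁻ z in R, J z) = ∫⁻ y in t, ∫⁻ x in s, J (↑x + ↑y * I) := by
    have h1 : (∫⁻ p in e.symm ⁻¹' R, J (e.symm p)) = ∫⁻ z in R, J z :=
      (MeasurePreserving.symm e hmp).setLIntegral_comp_preimage_emb e.symm.measurableEmbedding J R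
    rw [← h1, hRpre]
    have h2 : ∀ p : ℝ × ℝ, J (e.symm p) = J (↑p.1 + ↑p.2 * I) := by
      intro p
      rw [Complex.measurableEquivRealProd_symm_apply, Complex.mk_eq_add_mul_I]
    simp only [h2]
    rw [Measure.volume_eq_prod, ← Measure.prod_restrict]
    exact lintegral_prod_symm _ hFmeas
  -- the per-line estimate
  have hline : ∀ y ∈ t, ENNReal.ofReal (a'^2) ≤
      ENNReal.ofReal a * (ENNReal.ofReal C * ∫⁻ x in s, J (↑x + ↑y * I)) := by
    intro y hy
    set G : ℝ → ℝ≥0∞ := fun x => ENNReal.ofReal ‖fderiv ℝ f (↑x + ↑y * I) 1‖ with hG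
    have hpathc : Continuous fun x : ℝ => (↑x + ↑y * I : ℂ) :=
      Complex.continuous_ofReal.add continuous_const
    have hderivcont : ContinuousOn (fun x : ℝ => fderiv ℝ f (↑x + ↑y * I) 1) s := by
      have := hC1.comp hpathc.continuousOn (fun x hx => hmemR x y hx hy)
      exact (ContinuousLinearMap.apply ℝ ℂ (1:ℂ)).continuous.comp_continuousOn this
    have hGcont : ContinuousOn G s :=
      ENNReal.continuous_ofReal.comp_continuousOn hderivcont.norm
    have hGmeas : AEMeasurable G (volume.restrict s) :=
      hGcont.aemeasurable measurableSet_Ioo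
    have hder : ∀ x ∈ s, HasDerivAt (fun x : ℝ => f (↑x + ↑y * I))
        (fderiv ℝ f (↑x + ↑y * I) 1) x := by
      intro x hx
      have hp : HasDerivAt (fun x : ℝ => (↑x + ↑y * I : ℂ)) 1 x := by
        have h0 : HasDerivAt (fun x : ℝ => (↑x : ℂ)) 1 x := by
          have := Complex.ofRealCLM.hasDerivAt (x := x); simp at this; exact this
        simpa using h0.add_const (↑y * I)
      have hf' : HasFDerivAt f (fderiv ℝ f (↑x + ↑y * I)) (↑x + ↑y * I) :=
        (hdiff _ (hmemR x y hx hy)).hasFDerivAt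
      have := hf'.comp_hasDerivAt x hp; exact this
    -- claim 1: the lower bound on the length integral
    have claim1 : ENNReal.ofReal a' ≤ ∫⁻ x in s, G x := by
      set K := ∫⁻ x in s, G x with hK
      have hbound : ∀ δ ∈ Set.Ioo (0:ℝ) (a/2),
          ENNReal.ofReal ‖f (↑(a - δ) + ↑y * I) - f (↑δ + ↑y * I)‖ ≤ K := by
        intro δ hδ
        have hle : δ ≤ a - δ := by cases hδ; linarith
        have hsub : Set.uIcc δ (a - δ) ⊆ s := by
          rw [Set.uIcc_of_le hle]
          intro u hu
          exact ⟨lt_of_lt_of_le hδ.1 hu.1, lt_of_le_of_lt hu.2 (by cases hδ; linarith)⟩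
        have hint : IntervalIntegrable (fun x => fderiv ℝ f (↑x + ↑y * I) 1)
            volume δ (a - δ) := (hderivcont.mono hsub).intervalIntegrable
        have hFTC := intervalIntegral.integral_eq_sub_of_hasDerivAt
          (fun x hx => hder x (hsub hx)) hint
        have hnormle : ‖f (↑(a - δ) + ↑y * I) - f (↑δ + ↑y * I)‖ ≤
            ∫ x in δ..(a - δ), ‖fderiv ℝ f (↑x + ↑y * I) 1‖ := by
          rw [← hFTC]
          exact intervalIntegral.norm_integral_le_integral_norm hle
        have hIcc : Set.Icc δ (a - δ) ⊆ s := by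
          rw [← Set.uIcc_of_le hle]; exact hsub
        have hintOn : IntegrableOn (fun x : ℝ => ‖fderiv ℝ f (↑x + ↑y * I) 1‖)
            (Set.Ioc δ (a - δ)) volume :=
          (((hderivcont.mono hIcc).norm).integrableOn_Icc).mono_set Set.Ioc_subset_Icc_self
        calc ENNReal.ofReal ‖f (↑(a - δ) + ↑y * I) - f (↑δ + ↑y * I)‖
            ≤ ENNReal.ofReal (∫ x in δ..(a - δ), ‖fderiv ℝ f (↑x + ↑y * I) 1‖) :=
              ENNReal.ofReal_le_ofReal hnormle
          _ = ∫⁻ x in Set.Ioc δ (a - δ), G x := by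
              rw [intervalIntegral.integral_of_le hle,
                ofReal_integral_eq_lintegral_ofReal hintOn
                  (Filter.Eventually.of_forall fun x => norm_nonneg _)]
          _ ≤ K := by
              refine lintegral_mono_set ?_
              intro u hu
              exact ⟨lt_of_lt_of_le hδ.1 hu.1.le, lt_of_le_of_lt hu.2 (by cases hδ; linarith)⟩
      -- limit argument
      have hl : (𝓝[Set.Ioo (0:ℝ) (a/2)] 0).NeBot := by
        apply mem_closure_iff_nhdsWithin_neBot.mp
        rw [closure_Ioo (by positivity : (0:ℝ) ≠ a/2)]
        exact ⟨le_refl _, by linarith⟩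
      haveI := hl
      have hmapIoo : ∀ δ ∈ Set.Ioo (0:ℝ) (a/2), (↑δ + ↑y * I : ℂ) ∈ R := fun δ hδ =>
        hmemR δ y ⟨hδ.1, by rcases hδ with ⟨h1, h2⟩; linarith⟩ hy
      have hmapIoo2 : ∀ δ ∈ Set.Ioo (0:ℝ) (a/2), (↑(a - δ) + ↑y * I : ℂ) ∈ R := fun δ hδ => by
        rcases hδ with ⟨h1, h2⟩
        exact hmemR _ y ⟨by linarith, by linarith⟩ hy
      have hpath1n : Tendsto (fun δ : ℝ => (↑δ + ↑y * I : ℂ)) (𝓝[Set.Ioo (0:ℝ) (a/2)] 0)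
          (𝓝 (↑(0:ℝ) + ↑y * I)) := (hpathc.tendsto 0).mono_left nhdsWithin_le_nhds
      have hpath2c : Continuous fun δ : ℝ => (↑(a - δ) + ↑y * I : ℂ) :=
        hpathc.comp (continuous_const.sub continuous_id)
      have hpath2n : Tendsto (fun δ : ℝ => (↑(a - δ) + ↑y * I : ℂ))
          (𝓝[Set.Ioo (0:ℝ) (a/2)] 0) (𝓝 (↑a + ↑y * I)) := by
        have := (hpath2c.tendsto 0).mono_left
          (nhdsWithin_le_nhds (s := Set.Ioo (0:ℝ) (a/2)))
        simpa using this
      have hclmem1 : (↑(0:ℝ) + ↑y * I : ℂ) ∈ closure R :=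
        mem_closure_of_tendsto hpath1n
          (eventually_mem_nhdsWithin.mono fun δ hδ => hmapIoo δ hδ)
      have hclmem2 : (↑a + ↑y * I : ℂ) ∈ closure R :=
        mem_closure_of_tendsto hpath2n
          (eventually_mem_nhdsWithin.mono fun δ hδ => hmapIoo2 δ hδ)
      have hpath1 : Tendsto (fun δ : ℝ => (↑δ + ↑y * I : ℂ)) (𝓝[Set.Ioo (0:ℝ) (a/2)] 0)
          (𝓝[closure R] (↑(0:ℝ) + ↑y * I)) := by
        rw [tendsto_nhdsWithin_iff]
        exact ⟨hpath1n,
          eventually_mem_nhdsWithin.mono fun δ hδ => subset_closure (hmapIoo δ hδ)⟩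
      have hpath2 : Tendsto (fun δ : ℝ => (↑(a - δ) + ↑y * I : ℂ))
          (𝓝[Set.Ioo (0:ℝ) (a/2)] 0) (𝓝[closure R] (↑a + ↑y * I)) := by
        rw [tendsto_nhdsWithin_iff]
        exact ⟨hpath2n,
          eventually_mem_nhdsWithin.mono fun δ hδ => subset_closure (hmapIoo2 δ hδ)⟩
      have htend1 : Tendsto (fun δ : ℝ => f (↑δ + ↑y * I)) (𝓝[Set.Ioo (0:ℝ) (a/2)] 0)
          (𝓝 (f (↑(0:ℝ) + ↑y * I))) := (hcont _ hclmem1).tendsto.comp hpath1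
      have htend2 : Tendsto (fun δ : ℝ => f (↑(a - δ) + ↑y * I)) (𝓝[Set.Ioo (0:ℝ) (a/2)] 0)
          (𝓝 (f (↑a + ↑y * I))) := (hcont _ hclmem2).tendsto.comp hpath2
      have htendnorm : Tendsto
          (fun δ : ℝ => ENNReal.ofReal ‖f (↑(a - δ) + ↑y * I) - f (↑δ + ↑y * I)‖)
          (𝓝[Set.Ioo (0:ℝ) (a/2)] 0)
          (𝓝 (ENNReal.ofReal ‖f (↑a + ↑y * I) - f (↑(0:ℝ) + ↑y * I)‖)) :=
        (ENNReal.continuous_ofReal.tendsto _).comp ((htend2.sub htend1).norm)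
      have hKbound : ENNReal.ofReal ‖f (↑a + ↑y * I) - f (↑(0:ℝ) + ↑y * I)‖ ≤ K :=
        le_of_tendsto htendnorm (eventually_mem_nhdsWithin.mono fun δ hδ => hbound δ hδ)
      have hre0 : (f (↑(0:ℝ) + ↑y * I)).re = 0 := (hside0 _ hclmem1 (by simp)).1
      have hreA : (f (↑a + ↑y * I)).re = a' := (hsidea _ hclmem2 (by simp)).1
      have ha'le : a' ≤ ‖f (↑a + ↑y * I) - f (↑(0:ℝ) + ↑y * I)‖ := by
        have heq : a' = (f (↑a + ↑y * I) - f (↑(0:ℝ) + ↑y * I)).re := by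
          rw [Complex.sub_re, hre0, hreA, sub_zero]
        rw [heq]
        calc (f (↑a + ↑y * I) - f (↑(0:ℝ) + ↑y * I)).re
            ≤ ‖f (↑a + ↑y * I) - f (↑(0:ℝ) + ↑y * I)‖ := Complex.re_le_norm _
          _ = ‖f (↑a + ↑y * I) - f (↑(0:ℝ) + ↑y * I)‖ := rfl
      exact (ENNReal.ofReal_le_ofReal ha'le).trans hKbound
    -- combine: Cauchy-Schwarz and pointwise bound
    have claim2 := cauchy_schwarz_lintegral (volume.restrict s) G hGmeas
    rw [Measure.restrict_apply_univ] at claim2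
    have hvols : volume s = ENNReal.ofReal a := by rw [hs, Real.volume_Ioo, sub_zero]
    have claim3 : (∫⁻ x in s, G x ^ 2) ≤ ENNReal.ofReal C * ∫⁻ x in s, J (↑x + ↑y * I) := by
      have hptwise : ∀ x ∈ s, G x ^ 2 ≤ ENNReal.ofReal C * J (↑x + ↑y * I) := by
        intro x hx
        have hz := hmemR x y hx hy
        have hkey := key_ptwise C _ (hJac _ hz) (hdil _ hz)
        rw [hG]
        simp only
        rw [← ENNReal.ofReal_pow (norm_nonneg _)]
        refine (ENNReal.ofReal_le_ofReal hkey).trans ?_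
        rw [ENNReal.ofReal_mul hC0]
      calc (∫⁻ x in s, G x ^ 2) ≤ ∫⁻ x in s, ENNReal.ofReal C * J (↑x + ↑y * I) :=
            lintegral_mono_ae ((ae_restrict_iff' measurableSet_Ioo).2
              (Filter.Eventually.of_forall hptwise))
        _ = ENNReal.ofReal C * ∫⁻ x in s, J (↑x + ↑y * I) :=
            lintegral_const_mul' _ _ ENNReal.ofReal_ne_top
    calc ENNReal.ofReal (a'^2) = (ENNReal.ofReal a')^2 := by
          rw [← ENNReal.ofReal_pow ha'.le]
      _ ≤ (∫⁻ x in s, G x)^2 := pow_le_pow_left' claim1 2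
      _ ≤ volume s * ∫⁻ x in s, G x ^ 2 := claim2
      _ = ENNReal.ofReal a * ∫⁻ x in s, G x ^ 2 := by rw [hvols]
      _ ≤ ENNReal.ofReal a * (ENNReal.ofReal C * ∫⁻ x in s, J (↑x + ↑y * I)) :=
            mul_le_mul_right claim3 _
  -- integrate the per-line estimate over y
  have hvolt : volume t = ENNReal.ofReal b := by rw [ht, Real.volume_Ioo, sub_zero]
  have hmain : ENNReal.ofReal (a'^2) * ENNReal.ofReal b ≤
      ENNReal.ofReal a * (ENNReal.ofReal C * (ENNReal.ofReal a' * ENNReal.ofReal b')) := by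
    calc ENNReal.ofReal (a'^2) * ENNReal.ofReal b
        = ∫⁻ _ in t, ENNReal.ofReal (a'^2) := by rw [setLIntegral_const, hvolt]
      _ ≤ ∫⁻ y in t, ENNReal.ofReal a * (ENNReal.ofReal C * ∫⁻ x in s, J (↑x + ↑y * I)) :=
          lintegral_mono_ae ((ae_restrict_iff' measurableSet_Ioo).2
            (Filter.Eventually.of_forall hline))
      _ = ENNReal.ofReal a * ∫⁻ y in t, ENNReal.ofReal C * ∫⁻ x in s, J (↑x + ↑y * I) :=
          lintegral_const_mul' _ _ ENNReal.ofReal_ne_top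
      _ = ENNReal.ofReal a * (ENNReal.ofReal C * ∫⁻ y in t, ∫⁻ x in s, J (↑x + ↑y * I)) := by
          rw [lintegral_const_mul' _ _ ENNReal.ofReal_ne_top]
      _ = ENNReal.ofReal a * (ENNReal.ofReal C * (ENNReal.ofReal a' * ENNReal.ofReal b')) := by
          rw [← hT2, hT1]
  have hreal : a'^2 * b ≤ a * (C * (a' * b')) := by
    rw [← ENNReal.ofReal_mul (by positivity), ← ENNReal.ofReal_mul ha'.le,
      ← ENNReal.ofReal_mul hC0, ← ENNReal.ofReal_mul ha.le] at hmain
    exact (ENNReal.ofReal_le_ofReal_iff (by positivity)).mp hmain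
  have hba : b * a' ≤ C * b' * a := by nlinarith [hreal, ha', sq_nonneg a']
  rw [div_le_iff₀ ha, show C * (b' / a') * a = C * b' * a / a' from by ring,
    le_div_iff₀ ha']
  linarith
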